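/- Let T > 0 and E : ℝ → ℝ be continuous and T-periodic, and suppose there is a nonnegative continuous function D : ℝ → ℝ and a constant C ≥ 0 such that E(t) − E(s) + ∫ₛᵗ D(r) dr ≤ C(t − s)^{1/2} (∫ₛᵗ D(r) dr)^{1/2} + C for all s ≤ t. Then ∫₀ᵀ D(t) dt ≤ C² T + 2C + C√(C²T + 2C)·√T, i.e. the total dissipation over one period is bounded by a constant depending only on C and T. -/
import Mathlib

/-- Quadratic inequality lemma: if `x ≥ 0` and `x² ≤ a x + b` with `a, b ≥ 0`,
then `x ≤ a + √b`. -/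
lemma quad_root_bound (a b x : ℝ) (ha : 0 ≤ a) (hb : 0 ≤ b) (hx : 0 ≤ x)
    (h : x ^ 2 ≤ a * x + b) : x ≤ a + Real.sqrt b := by
  by_contra hcon
  push_neg at hcon
  have hs : 0 ≤ Real.sqrt b := Real.sqrt_nonneg b
  have hsq : Real.sqrt b ^ 2 = b := Real.sq_sqrt hb
  nlinarith [mul_nonneg ha hs, sq_nonneg (x - a - Real.sqrt b)]

/-- Abstract version: if `I ≤ a √I + b`, then `I ≤ a² + 2b + a √(a² + 2b)`. -/
lemma quad_self_bound (a b I : ℝ) (ha : 0 ≤ a) (hb : 0 ≤ b) (hI : 0 ≤ I)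
    (h : I ≤ a * Real.sqrt I + b) :
    I ≤ a ^ 2 + 2 * b + a * Real.sqrt (a ^ 2 + 2 * b) := by
  set x := Real.sqrt I with hxdef
  have hx : 0 ≤ x := Real.sqrt_nonneg I
  have hxsq : x ^ 2 = I := Real.sq_sqrt hI
  have hq : x ^ 2 ≤ a * x + b := by rw [hxsq]; exact h
  have hx_le : x ≤ a + Real.sqrt b := quad_root_bound a b x ha hb hx hq
  have hbK : Real.sqrt b ≤ Real.sqrt (a ^ 2 + 2 * b) := by
    apply Real.sqrt_le_sqrt; nlinarith
  have haI : a * x ≤ a * (a + Real.sqrt b) := mul_le_mul_of_nonneg_left hx_le ha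
  have h2 : a * Real.sqrt b ≤ a * Real.sqrt (a ^ 2 + 2 * b) :=
    mul_le_mul_of_nonneg_left hbK ha
  calc I ≤ a * x + b := h
    _ ≤ a * (a + Real.sqrt b) + b := by linarith
    _ = a ^ 2 + a * Real.sqrt b + b := by ring
    _ ≤ a ^ 2 + 2 * b + a * Real.sqrt (a ^ 2 + 2 * b) := by linarith

/-- Abstract diffusion estimate: for a `T`-periodic energy with dissipation `D`
controlled as in the energy inequality, the total dissipation over one period is
bounded by a constant depending only on `C` and `T`. -/
theorem diffusion_estimate (T C : ℝ) (hT : 0 < T) (hC : 0 ≤ C)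
    (E D : ℝ → ℝ) (hE : Continuous E) (hper : Function.Periodic E T)
    (hD : Continuous D) (hDpos : ∀ t, 0 ≤ D t)
    (h : ∀ s t : ℝ, s ≤ t →
      E t - E s + (∫ r in s..t, D r) ≤
        C * Real.sqrt (t - s) * Real.sqrt (∫ r in s..t, D r) + C) :
    (∫ t in (0:ℝ)..T, D t) ≤
      C ^ 2 * T + 2 * C + C * Real.sqrt (C ^ 2 * T + 2 * C) * Real.sqrt T := by
  have hET : E T = E 0 := by simpa using hper 0
  set I := ∫ t in (0:ℝ)..T, D t with hIdef
  have hI0 : 0 ≤ I :=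
    intervalIntegral.integral_nonneg hT.le (fun t _ => hDpos t)
  have h0 := h 0 T hT.le
  rw [hET] at h0
  have hkey : I ≤ (C * Real.sqrt T) * Real.sqrt I + C := by
    have : Real.sqrt (T - 0) = Real.sqrt T := by norm_num
    rw [this] at h0
    linarith
  have ha : 0 ≤ C * Real.sqrt T := mul_nonneg hC (Real.sqrt_nonneg T)
  have := quad_self_bound (C * Real.sqrt T) C I ha hC hI0 hkey
  have hTsq : (C * Real.sqrt T) ^ 2 = C ^ 2 * T := by
    rw [mul_pow, Real.sq_sqrt hT.le]
  rw [hTsq] at this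
  calc I ≤ C ^ 2 * T + 2 * C + (C * Real.sqrt T) * Real.sqrt (C ^ 2 * T + 2 * C) := this
    _ = C ^ 2 * T + 2 * C + C * Real.sqrt (C ^ 2 * T + 2 * C) * Real.sqrt T := by ring
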